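/- Let L be a linear endomorphism of a finite-dimensional complex vector space whose nonzero eigenvalues all have strictly negative real part and whose eigenvalue 0 is semisimple, with associated projection P onto ker L along Im L. Then the integral L⁻ := −∫₀^∞ (exp(sL) − P) ds converges absolutely, L⁻ vanishes on ker L, and L L⁻ = L⁻ L = Id − P, i.e. L⁻ is the pseudo-inverse of L relative to the decomposition V = ker L ⊕ Im L. -/

import Mathlib

open MeasureTheory Filter Set Topology

section Aux

variable {V : Type*} [NormedAddCommGroup V] [NormedSpace ℂ V] [FiniteDimensional ℂ V]

lemma auxTendsto (j : ℕ) {b : ℝ} (hb : 0 < b) :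
    Tendsto (fun x : ℝ => x ^ j * Real.exp (-b * x)) atTop (𝓝 0) := by
  simpa [Real.rpow_natCast] using tendsto_rpow_mul_exp_neg_mul_atTop_nhds_zero j b hb

lemma basicFun (μ : ℂ) (hμ : μ.re < 0) (j : ℕ) (v : V) :
    Integrable (fun s : ℝ => (Complex.exp (s * μ) * (s : ℂ) ^ j) • v)
      (volume.restrict (Set.Ioi (0:ℝ))) ∧
    Tendsto (fun s : ℝ => (Complex.exp (s * μ) * (s : ℂ) ^ j) • v) atTop (𝓝 0) := by
  have hb2 : 0 < -μ.re / 2 := by linarith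
  have hnorm : ∀ s : ℝ, 0 ≤ s →
      ‖Complex.exp (s * μ) * (s : ℂ) ^ j‖ = s ^ j * Real.exp (μ.re * s) := by
    intro s hs
    rw [norm_mul, norm_pow, Complex.norm_exp,
      Complex.norm_real, Real.norm_eq_abs, abs_of_nonneg hs]
    simp [mul_comm]
  have hg : IntegrableOn (fun s : ℝ => s ^ j * Real.exp (μ.re * s)) (Ioi 0) := by
    apply integrable_of_isBigO_exp_neg hb2
      (Continuous.continuousOn (by continuity))
    refine Asymptotics.IsBigO.of_bound 1 ?_
    filter_upwards [(auxTendsto j hb2).eventually (eventually_le_nhds one_pos),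
      eventually_ge_atTop (0:ℝ)] with x h1 hx
    have hsplit : x ^ j * Real.exp (μ.re * x)
        = (x ^ j * Real.exp (-(-μ.re / 2) * x)) * Real.exp (-(-μ.re / 2) * x) := by
      rw [mul_assoc, ← Real.exp_add]; ring_nf
    rw [Real.norm_eq_abs, Real.norm_eq_abs, Real.abs_exp,
      abs_of_nonneg (by positivity), hsplit]
    exact mul_le_mul_of_nonneg_right h1 (Real.exp_pos _).le
  have hc : Integrable (fun s : ℝ => Complex.exp (s * μ) * (s:ℂ)^j)
      (volume.restrict (Ioi (0:ℝ))) := by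
    refine Integrable.mono' hg (Continuous.aestronglyMeasurable (by continuity)) ?_
    filter_upwards [ae_restrict_mem measurableSet_Ioi] with s hs
    rw [hnorm s (le_of_lt hs)]
  constructor
  · exact hc.smul_const v
  · rw [tendsto_zero_iff_norm_tendsto_zero]
    have h0 : Tendsto (fun s : ℝ => (s ^ j * Real.exp (μ.re * s)) * ‖v‖) atTop (𝓝 0) := by
      have := (auxTendsto j (by linarith : (0:ℝ) < -μ.re)).mul_const ‖v‖
      rw [zero_mul] at this
      refine this.congr fun s => ?_
      ring_nf
    refine h0.congr' ?_
    filter_upwards [eventually_ge_atTop (0:ℝ)] with s hs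
    rw [norm_smul, hnorm s hs]

end Aux

section Aux2
set_option linter.unusedSectionVars false

variable {V : Type*} [NormedAddCommGroup V] [NormedSpace ℂ V] [FiniteDimensional ℂ V]

lemma clm_pow_apply (B : V →L[ℂ] V) (k : ℕ) (x : V) :
    ((B : V →ₗ[ℂ] V) ^ k) x = (B ^ k) x := by
  induction k generalizing x with
  | zero => simp
  | succ n ih =>
      rw [pow_succ, pow_succ, Module.End.mul_apply, ContinuousLinearMap.mul_apply, ih]
      simp

lemma clm_sub_smul_pow_apply (L : V →L[ℂ] V) (μ : ℂ) (k : ℕ) (x : V) :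
    (((L : V →ₗ[ℂ] V) - μ • 1) ^ k) x = (((L - μ • 1 : V →L[ℂ] V)) ^ k) x := by
  rw [← clm_pow_apply]
  congr 2

lemma exp_eq_sum (L : V →L[ℂ] V) (μ : ℂ) (m : ℕ) (x : V)
    (hx : (((L - μ • 1 : V →L[ℂ] V)) ^ m) x = 0) (s : ℝ) :
    NormedSpace.exp (s • L) x
      = ∑ j ∈ Finset.range m,
          (Complex.exp (s * μ) * (s:ℂ) ^ j) •
            (((j.factorial : ℂ))⁻¹ • ((L - μ • 1 : V →L[ℂ] V) ^ j) x) := by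
  letI : NormedAlgebra ℚ (V →L[ℂ] V) := .restrictScalars ℚ ℂ _
  set N : V →L[ℂ] V := L - μ • 1 with hN
  have hsL : s • L = ((s:ℂ) * μ) • (1 : V →L[ℂ] V) + (s:ℂ) • N := by
    rw [← Complex.coe_smul, hN]
    module
  have hcomm : Commute (((s:ℂ)*μ) • (1 : V →L[ℂ] V)) ((s:ℂ) • N) :=
    ((Commute.one_left _).smul_left _).smul_right _
  rw [hsL, NormedSpace.exp_add_of_commute hcomm]
  have h1 : NormedSpace.exp (((s:ℂ)*μ) • (1 : V →L[ℂ] V))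
      = Complex.exp ((s:ℂ)*μ) • (1 : V →L[ℂ] V) := by
    rw [← Algebra.algebraMap_eq_smul_one, ← NormedSpace.algebraMap_exp_comm,
      Complex.exp_eq_exp_ℂ, Algebra.algebraMap_eq_smul_one]
  -- expand exp of nilpotent part applied to x
  have h2 : NormedSpace.exp ((s:ℂ) • N) x
      = ∑ j ∈ Finset.range m, ((j.factorial : ℂ))⁻¹ • ((s:ℂ) ^ j • (N ^ j) x) := by
    have hsum := NormedSpace.expSeries_summable' (𝕂 := ℂ) ((s:ℂ) • N)
    have happ : NormedSpace.exp ((s:ℂ) • N) x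
        = ∑' n : ℕ, (((n.factorial : ℂ))⁻¹ • ((s:ℂ) • N) ^ n) x := by
      rw [NormedSpace.exp_eq_tsum ℂ]
      exact ((ContinuousLinearMap.apply ℂ V x).map_tsum hsum)
    rw [happ]
    rw [tsum_eq_sum (s := Finset.range m) ?_]
    · refine Finset.sum_congr rfl fun j _ => ?_
      rw [smul_pow, ContinuousLinearMap.smul_apply, ContinuousLinearMap.smul_apply]
    · intro n hn
      have hnm : m ≤ n := le_of_not_gt (fun h => hn (Finset.mem_range.mpr h))
      have hNn : (N ^ n) x = 0 := by
        have : N ^ n = N ^ (n - m) * N ^ m := by rw [← pow_add, Nat.sub_add_cancel hnm]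
        rw [this, ContinuousLinearMap.mul_apply, hx, map_zero]
      rw [smul_pow, ContinuousLinearMap.smul_apply, ContinuousLinearMap.smul_apply, hNn]
      simp
  rw [h1, smul_mul_assoc, one_mul, ContinuousLinearMap.smul_apply, h2, Finset.smul_sum]
  refine Finset.sum_congr rfl fun j _ => ?_
  rw [smul_smul, smul_smul, smul_smul]
  congr 1
  ring

end Aux2

section Aux3
set_option linter.unusedSectionVars false

variable {V : Type*} [NormedAddCommGroup V] [NormedSpace ℂ V] [FiniteDimensional ℂ V]

lemma exp_apply_ker (L : V →L[ℂ] V) (x : V) (hx : L x = 0) (s : ℝ) :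
    NormedSpace.exp (s • L) x = x := by
  have h := exp_eq_sum L 0 1 x (by simpa using hx) s
  simpa using h

lemma mem_range_of_gen (A : Module.End ℂ V) {μ : ℂ} (hμ : μ ≠ 0) (m : ℕ) (x : V)
    (hx : ((A - μ • 1) ^ m) x = 0) : x ∈ LinearMap.range A := by
  set N : Module.End ℂ V := A - μ • 1 with hNdef
  set g : ℕ → V := fun j => ((-1:ℂ)^j * (μ⁻¹)^j) • (N ^ j) x with hg
  refine ⟨∑ j ∈ Finset.range m, ((-1:ℂ)^j * (μ⁻¹)^(j+1)) • (N ^ j) x, ?_⟩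
  rw [map_sum]
  have hterm : ∀ j, A (((-1:ℂ)^j * (μ⁻¹)^(j+1)) • (N ^ j) x) = g j - g (j+1) := by
    intro j
    have hA : ∀ y : V, A y = μ • y + N y := by
      intro y; simp [hNdef]
    have h1 : (N ^ (j+1)) x = N ((N ^ j) x) := by
      rw [pow_succ', Module.End.mul_apply]
    have e1 : ((-1:ℂ)^j * (μ⁻¹)^(j+1) * μ) = (-1)^j * (μ⁻¹)^j := by
      rw [pow_succ]
      field_simp
    have e2 : ((-1:ℂ)^(j+1) * (μ⁻¹)^(j+1)) = -((-1:ℂ)^j * (μ⁻¹)^(j+1)) := by ring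
    rw [_root_.map_smul, hA, smul_add, smul_smul, e1, hg]
    simp only [h1, e2, neg_smul, sub_neg_eq_add]
  rw [Finset.sum_congr rfl (fun j _ => hterm j), Finset.sum_range_sub' g]
  have hgm : g m = 0 := by
    rw [hg]
    simp only [hx, smul_zero]
  rw [hgm, hg]
  simp

end Aux3

section Aux4
set_option linter.unusedSectionVars false
variable {V : Type*} [NormedAddCommGroup V] [NormedSpace ℂ V] [FiniteDimensional ℂ V]

lemma opNorm_le_sum_basis {ι : Type*} [Fintype ι] (b : Module.Basis ι ℂ V) (T : V →L[ℂ] V) :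
    ‖T‖ ≤ ∑ i, ‖LinearMap.toContinuousLinearMap (b.coord i)‖ * ‖T (b i)‖ := by
  refine T.opNorm_le_bound (Finset.sum_nonneg fun i _ => by positivity) fun x => ?_
  conv_lhs => rw [← b.sum_repr x]
  rw [map_sum, Finset.sum_mul]
  refine (norm_sum_le _ _).trans (Finset.sum_le_sum fun i _ => ?_)
  rw [_root_.map_smul, norm_smul]
  have hco : ‖b.repr x i‖ ≤ ‖LinearMap.toContinuousLinearMap (b.coord i)‖ * ‖x‖ := by
    have := (LinearMap.toContinuousLinearMap (b.coord i)).le_opNorm x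
    simpa using this
  calc ‖b.repr x i‖ * ‖T (b i)‖
      ≤ (‖LinearMap.toContinuousLinearMap (b.coord i)‖ * ‖x‖) * ‖T (b i)‖ :=
        mul_le_mul_of_nonneg_right hco (norm_nonneg _)
    _ = ‖LinearMap.toContinuousLinearMap (b.coord i)‖ * ‖T (b i)‖ * ‖x‖ := by ring

end Aux4

set_option maxHeartbeats 1600000 in
/-- The pseudo-inverse of `L` as the absolutely convergent integral
`L⁻ = -∫₀^∞ (exp (s L) - P) ds`: it vanishes on `ker L` and satisfies
`L L⁻ = L⁻ L = Id - P`. -/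
theorem pseudo_inverse_integral_formula
    {V : Type*} [NormedAddCommGroup V] [NormedSpace ℂ V] [FiniteDimensional ℂ V]
    (L P : V →L[ℂ] V)
    (hspec : ∀ μ : ℂ, Module.End.HasEigenvalue (L : V →ₗ[ℂ] V) μ → μ ≠ 0 → μ.re < 0)
    (hss : LinearMap.ker ((L : V →ₗ[ℂ] V) ^ 2) = LinearMap.ker (L : V →ₗ[ℂ] V))
    (hPker : ∀ x ∈ LinearMap.ker (L : V →ₗ[ℂ] V), P x = x)
    (hPim : ∀ x ∈ LinearMap.range (L : V →ₗ[ℂ] V), P x = 0) :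
    Integrable (fun s : ℝ => NormedSpace.exp (s • L) - P)
      (volume.restrict (Set.Ioi (0:ℝ))) ∧
    (∀ x ∈ LinearMap.ker (L : V →ₗ[ℂ] V),
      (-∫ s in Set.Ioi (0:ℝ), (NormedSpace.exp (s • L) - P)) x = 0) ∧
    L.comp (-∫ s in Set.Ioi (0:ℝ), (NormedSpace.exp (s • L) - P))
      = ContinuousLinearMap.id ℂ V - P ∧
    (-∫ s in Set.Ioi (0:ℝ), (NormedSpace.exp (s • L) - P)).comp L
      = ContinuousLinearMap.id ℂ V - P := by
  classical
  set A : Module.End ℂ V := (L : V →ₗ[ℂ] V) with hAdef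
  -- powers of the kernel collapse
  have hker : ∀ (k : ℕ) (x : V), (A ^ k) x = 0 → A x = 0 := by
    intro k
    induction k with
    | zero =>
        intro x hx
        simp only [pow_zero, Module.End.one_apply] at hx
        simp [hx]
    | succ n ih =>
        intro x hx
        rcases Nat.eq_zero_or_pos n with h0 | hpos
        · subst h0; simpa using hx
        · have hx' : (A ^ n) (A x) = 0 := by
            rw [← Module.End.mul_apply, ← pow_succ]
            exact hx
          have h2 : (A ^ 2) x = 0 := by
            rw [pow_two, Module.End.mul_apply]
            exact ih (A x) hx'
          exact LinearMap.mem_ker.mp (hss ▸ LinearMap.mem_ker.mpr h2)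
  -- pointwise integrability and decay
  have key : ∀ x : V,
      Integrable (fun s : ℝ => NormedSpace.exp (s • L) x - P x)
        (volume.restrict (Set.Ioi (0:ℝ))) ∧
      Tendsto (fun s : ℝ => NormedSpace.exp (s • L) x - P x) atTop (𝓝 0) := by
    intro x
    have hx : x ∈ ⨆ μ : ℂ, A.maxGenEigenspace μ := by
      rw [Module.End.iSup_maxGenEigenspace_eq_top]; trivial
    rw [Submodule.mem_iSup_iff_exists_finsupp] at hx
    obtain ⟨d, hd, hsum⟩ := hx
    have hfx : ∀ s : ℝ, NormedSpace.exp (s • L) x - P x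
        = ∑ μ ∈ d.support, (NormedSpace.exp (s • L) (d μ) - P (d μ)) := by
      intro s
      rw [← hsum, Finsupp.sum, map_sum, map_sum, Finset.sum_sub_distrib]
    have hpiece : ∀ μ ∈ d.support,
        Integrable (fun s : ℝ => NormedSpace.exp (s • L) (d μ) - P (d μ))
          (volume.restrict (Set.Ioi (0:ℝ))) ∧
        Tendsto (fun s : ℝ => NormedSpace.exp (s • L) (d μ) - P (d μ)) atTop (𝓝 0) := by
      intro μ hμmem
      obtain ⟨k, hk⟩ := (Module.End.mem_maxGenEigenspace A μ (d μ)).mp (hd μ)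
      by_cases hμ0 : μ = 0
      · have hk0 : (A ^ k) (d μ) = 0 := by simpa [hμ0] using hk
        have hker0 : A (d μ) = 0 := hker k _ hk0
        have hzero : ∀ s : ℝ, NormedSpace.exp (s • L) (d μ) - P (d μ) = 0 := by
          intro s
          rw [exp_apply_ker L _ hker0, hPker _ (LinearMap.mem_ker.mpr hker0), sub_self]
        constructor
        · refine (integrable_zero _ _ _).congr ?_
          exact Filter.Eventually.of_forall fun s => (hzero s).symm
        · exact tendsto_const_nhds.congr fun s => (hzero s).symm
      · have hdne : d μ ≠ 0 := Finsupp.mem_support_iff.mp hμmem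
        have heig : Module.End.HasEigenvalue A μ := by
          refine Module.End.hasEigenvalue_of_hasGenEigenvalue (k := k) ?_
          rw [Module.End.HasGenEigenvalue]
          intro hbot
          have hmem : d μ ∈ A.genEigenspace μ (k : ℕ∞) :=
            (Module.End.mem_genEigenspace_nat).mpr hk
          rw [hbot] at hmem
          exact hdne (Submodule.mem_bot ℂ |>.mp hmem)
        have hre : μ.re < 0 := hspec μ heig hμ0
        have hPd : P (d μ) = 0 := hPim _ (mem_range_of_gen A hμ0 k _ hk)
        have hfun : (fun s : ℝ => NormedSpace.exp (s • L) (d μ) - P (d μ))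
            = fun s : ℝ => ∑ j ∈ Finset.range k, (Complex.exp (s * μ) * (s:ℂ) ^ j) •
                (((j.factorial : ℂ))⁻¹ • ((L - μ • 1 : V →L[ℂ] V) ^ j) (d μ)) := by
          funext s
          rw [hPd, sub_zero]
          exact exp_eq_sum L μ k (d μ) (by rw [← clm_sub_smul_pow_apply]; exact hk) s
        rw [hfun]
        constructor
        · exact integrable_finset_sum _ fun j _ => (basicFun μ hre j _).1
        · have h := tendsto_finset_sum (Finset.range k) (fun j _ => (basicFun μ hre j
            (((j.factorial : ℂ))⁻¹ • ((L - μ • 1 : V →L[ℂ] V) ^ j) (d μ))).2)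
          rw [Finset.sum_const_zero] at h
          exact h
    constructor
    · refine (integrable_finset_sum d.support fun μ hm => (hpiece μ hm).1).congr ?_
      exact Filter.Eventually.of_forall fun s => (hfx s).symm
    · have h := tendsto_finset_sum d.support (fun μ hm => (hpiece μ hm).2)
      rw [Finset.sum_const_zero] at h
      exact h.congr fun s => (hfx s).symm
  -- global integrability
  have hInt : Integrable (fun s : ℝ => NormedSpace.exp (s • L) - P)
      (volume.restrict (Set.Ioi (0:ℝ))) := by
    set b := Module.finBasis ℂ V with hb
    letI : NormedAlgebra ℚ (V →L[ℂ] V) := .restrictScalars ℚ ℂ _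
    have hcont : Continuous (fun s : ℝ => NormedSpace.exp (s • L) - P) :=
      (NormedSpace.exp_continuous.comp (continuous_id.smul continuous_const)).sub
        continuous_const
    refine Integrable.mono'
      (g := fun s : ℝ => ∑ i, ‖LinearMap.toContinuousLinearMap (b.coord i)‖ *
        ‖NormedSpace.exp (s • L) (b i) - P (b i)‖)
      (integrable_finset_sum _ fun i _ => ((key (b i)).1.norm.const_mul _))
      hcont.aestronglyMeasurable ?_
    refine Filter.Eventually.of_forall fun s => ?_
    have := opNorm_le_sum_basis b (NormedSpace.exp (s • L) - P)
    simpa [ContinuousLinearMap.sub_apply] using this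
  -- complementarity of kernel and range
  have hsup : LinearMap.ker A ⊔ LinearMap.range A = ⊤ := by
    have hinf : LinearMap.ker A ⊓ LinearMap.range A = ⊥ := by
      rw [Submodule.eq_bot_iff]
      rintro z ⟨hz1, hz2⟩
      obtain ⟨y, rfl⟩ := hz2
      have h2 : (A ^ 2) y = 0 := by
        rw [pow_two, Module.End.mul_apply]
        exact hz1
      exact LinearMap.mem_ker.mp (hss ▸ LinearMap.mem_ker.mpr h2)
    apply Submodule.eq_top_of_finrank_eq
    have h1 := Submodule.finrank_sup_add_finrank_inf_eq (LinearMap.ker A) (LinearMap.range A)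
    have h2 := LinearMap.finrank_range_add_finrank_ker A
    rw [hinf, finrank_bot] at h1
    omega
  have hLP : ∀ y : V, L (P y) = 0 := by
    intro y
    have hy : y ∈ LinearMap.ker A ⊔ LinearMap.range A := by rw [hsup]; trivial
    obtain ⟨kk, hkk, r, hr, rfl⟩ := Submodule.mem_sup.mp hy
    have hP : P (kk + r) = kk := by rw [map_add, hPker kk hkk, hPim r hr, add_zero]
    rw [hP]
    exact LinearMap.mem_ker.mp hkk
  -- the fundamental integral computation
  have hfix : ∀ x : V,
      ∫ s in Set.Ioi (0:ℝ), L (NormedSpace.exp (s • L) x - P x) = P x - x := by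
    intro x
    set g : ℝ → V := fun s => NormedSpace.exp (s • L) x - P x with hgdef
    have hg0 : g 0 = x - P x := by
      simp [hgdef, NormedSpace.exp_zero]
    have hderiv : ∀ s : ℝ, HasDerivAt g (L (g s)) s := by
      intro s
      have h1 : HasDerivAt (fun u : ℝ => NormedSpace.exp (u • L))
          (L * NormedSpace.exp (s • L)) s := by
        have h := _root_.hasDerivAt_exp_smul_const' (𝕂 := ℝ) L s
        exact h
      have h2 : HasDerivAt (fun u : ℝ => NormedSpace.exp (u • L) x)
          (L (NormedSpace.exp (s • L) x)) s := by
        have h3 := (((ContinuousLinearMap.apply ℂ V x).restrictScalars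
          ℝ).hasFDerivAt.comp_hasDerivAt s h1)
        simpa [Function.comp_def] using h3
      have h4 : L (NormedSpace.exp (s • L) x) = L (g s) := by
        rw [hgdef]
        simp [map_sub, hLP x]
      rw [← h4]
      exact h2.sub_const (P x)
    have hcont : ContinuousWithinAt g (Set.Ici (0:ℝ)) 0 :=
      (hderiv 0).continuousAt.continuousWithinAt
    have hint : IntegrableOn (fun s => L (g s)) (Set.Ioi (0:ℝ)) :=
      L.integrable_comp (key x).1
    have htend : Tendsto g atTop (𝓝 0) := (key x).2
    have hFTC := integral_Ioi_of_hasDerivAt_of_tendsto hcont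
      (fun s _ => hderiv s) hint htend
    rw [hg0, zero_sub, neg_sub] at hFTC
    exact hFTC
  refine ⟨hInt, ?_, ?_, ?_⟩
  · intro x hx
    have hx' : L x = 0 := LinearMap.mem_ker.mp hx
    have hz : (∫ s in Set.Ioi (0:ℝ), (NormedSpace.exp (s • L) - P)) x = 0 := by
      rw [ContinuousLinearMap.integral_apply hInt]
      have hzero : ∀ s : ℝ, (NormedSpace.exp (s • L) - P) x = 0 := by
        intro s
        rw [ContinuousLinearMap.sub_apply, exp_apply_ker L x hx', hPker x hx, sub_self]
      simp [hzero]
    rw [ContinuousLinearMap.neg_apply, hz, neg_zero]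
  · ext x
    rw [ContinuousLinearMap.comp_apply, ContinuousLinearMap.neg_apply, map_neg,
      ContinuousLinearMap.integral_apply hInt]
    simp only [ContinuousLinearMap.sub_apply]
    rw [← ContinuousLinearMap.integral_comp_comm L (key x).1, hfix x]
    simp [ContinuousLinearMap.sub_apply]
  · ext x
    rw [ContinuousLinearMap.comp_apply, ContinuousLinearMap.neg_apply,
      ContinuousLinearMap.integral_apply hInt]
    have hPLx : P (L x) = 0 := hPim _ ⟨x, rfl⟩
    have hintegrand : ∀ s : ℝ, (NormedSpace.exp (s • L) - P) (L x)
        = L (NormedSpace.exp (s • L) x - P x) := by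
      intro s
      have hc : Commute (NormedSpace.exp (s • L)) L :=
        (((Commute.refl L).smul_left s)).exp_left
      have hcomm : NormedSpace.exp (s • L) (L x) = L (NormedSpace.exp (s • L) x) := by
        calc NormedSpace.exp (s • L) (L x)
            = (NormedSpace.exp (s • L) * L) x := rfl
          _ = (L * NormedSpace.exp (s • L)) x := by rw [hc.eq]
          _ = L (NormedSpace.exp (s • L) x) := rfl
      rw [ContinuousLinearMap.sub_apply, hPLx, sub_zero, hcomm, map_sub, hLP x, sub_zero]
    rw [integral_congr_ae (Filter.Eventually.of_forall hintegrand)]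
    rw [hfix x]
    simp [ContinuousLinearMap.sub_apply]
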